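/- Let G be a graph on n vertices with maximum degree d. Then the line graph of G does not contain a clique minor of order larger than d·√n. Equivalently, if G_1, …, G_t are pairwise edge-disjoint connected subgraphs of G, each with at least one edge, such that every two of them share a vertex, then t ≤ d·√n. -/

import Mathlib

open SimpleGraph

/-- Let `G` be a graph on `n` vertices with maximum degree `d`.  If `G₁, …, G_t` are
pairwise edge-disjoint connected subgraphs of `G`, each with at least one edge, such
that every two of them share a vertex, then `t ≤ d·√n`.  (Equivalently, the line graph
of `G` has no clique minor of order larger than `d·√n`.) -/
private lemma mul_sub_one_aux (m : ℕ) : m * (m - 1) = m * m - m := by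
  cases m with
  | zero => simp
  | succ k =>
    rw [Nat.succ_sub_one, Nat.mul_succ]
    omega

theorem stmt_15 {V : Type*} [Fintype V] (G : SimpleGraph V) (n d : ℕ)
    (hn : n = Fintype.card V) (hd : ∀ v, (G.neighborSet v).ncard ≤ d)
    (t : ℕ) (Gi : Fin t → SimpleGraph V)
    (hsub : ∀ i, Gi i ≤ G)
    (hne : ∀ i, (Gi i).edgeSet.Nonempty)
    (hconn : ∀ i, ((Gi i).induce (Gi i).support).Connected)
    (hdisj : Pairwise fun i j => Disjoint (Gi i).edgeSet (Gi j).edgeSet)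
    (hmeet : ∀ i j, ((Gi i).support ∩ (Gi j).support).Nonempty) :
    (t : ℝ) ≤ (d : ℝ) * Real.sqrt n := by
  classical
  -- the set of indices whose subgraph contains `v`
  set M : V → Finset (Fin t) := fun v => Finset.univ.filter (fun i => v ∈ (Gi i).support)
    with hMdef
  -- each vertex is in at most `d` of the subgraphs
  have hMd : ∀ v, (M v).card ≤ d := by
    intro v
    have hw : ∀ i : Fin t, ∃ w, i ∈ M v → (Gi i).Adj v w := by
      intro i
      by_cases hi : i ∈ M v
      · have : v ∈ (Gi i).support := by
          simp only [hMdef, Finset.mem_filter] at hi; exact hi.2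
        obtain ⟨w, hw⟩ := this
        exact ⟨w, fun _ => hw⟩
      · exact ⟨v, fun h => absurd h hi⟩
    choose w hwadj using hw
    have hinj : (M v).card ≤ (G.neighborFinset v).card := by
      apply Finset.card_le_card_of_injOn w
      · intro i hi
        rw [Finset.mem_coe, SimpleGraph.mem_neighborFinset]
        exact hsub i (hwadj i hi)
      · intro i hi j hj hij
        by_contra hne'
        have h1 : s(v, w i) ∈ (Gi i).edgeSet := hwadj i hi
        have h2 : s(v, w i) ∈ (Gi j).edgeSet := by rw [hij]; exact hwadj j hj
        exact (hdisj hne').le_bot ⟨h1, h2⟩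
    calc (M v).card ≤ (G.neighborFinset v).card := hinj
      _ = (G.neighborSet v).ncard := by
          rw [SimpleGraph.neighborFinset_def, Set.ncard_eq_toFinset_card']
      _ ≤ d := hd v
  -- the number of edges of G is at most n*d/2, hence 2*t ≤ n*d
  have ht_nd : 2 * t ≤ n * d := by
    have he : ∀ i : Fin t, ∃ e, e ∈ (Gi i).edgeFinset := by
      intro i
      obtain ⟨e, he⟩ := hne i
      exact ⟨e, by rwa [SimpleGraph.mem_edgeFinset]⟩
    choose e hee using he
    have hcard : t ≤ G.edgeFinset.card := by
      have : (Finset.univ : Finset (Fin t)).card ≤ G.edgeFinset.card := by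
        apply Finset.card_le_card_of_injOn e
        · intro i _
          rw [Finset.mem_coe, SimpleGraph.mem_edgeFinset]
          exact SimpleGraph.edgeSet_mono (hsub i) (SimpleGraph.mem_edgeFinset.mp (hee i))
        · intro i _ j _ hij
          by_contra hne'
          exact (hdisj hne').le_bot ⟨SimpleGraph.mem_edgeFinset.mp (hee i), by
            rw [hij] at *; exact SimpleGraph.mem_edgeFinset.mp (hee j)⟩
      simpa using this
    have hsum : 2 * G.edgeFinset.card ≤ n * d := by
      have := G.sum_degrees_eq_twice_card_edges
      have hdeg : ∀ v : V, G.degree v ≤ d := by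
        intro v
        have : G.degree v = (G.neighborSet v).ncard := by
          rw [SimpleGraph.degree, SimpleGraph.neighborFinset_def,
            Set.ncard_eq_toFinset_card']
        rw [this]; exact hd v
      calc 2 * G.edgeFinset.card = ∑ v : V, G.degree v := this.symm
        _ ≤ ∑ _v : V, d := Finset.sum_le_sum (fun v _ => hdeg v)
        _ = Fintype.card V * d := by rw [Finset.sum_const, smul_eq_mul, Finset.card_univ]
        _ = n * d := by rw [hn]
    omega
  -- pair counting: t*(t-1) ≤ n * (d*(d-1))
  have hpairs : t * (t - 1) ≤ n * (d * (d - 1)) := by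
    have hsubset : (Finset.univ : Finset (Fin t)).offDiag ⊆
        Finset.univ.biUnion (fun v : V => (M v).offDiag) := by
      intro p hp
      rw [Finset.mem_offDiag] at hp
      obtain ⟨v, hv1, hv2⟩ := hmeet p.1 p.2
      rw [Finset.mem_biUnion]
      refine ⟨v, Finset.mem_univ v, ?_⟩
      rw [Finset.mem_offDiag]
      exact ⟨by simp [hMdef, hv1], by simp [hMdef, hv2], hp.2.2⟩
    have h1 : (Finset.univ : Finset (Fin t)).offDiag.card ≤
        ∑ v : V, ((M v).offDiag).card :=
      le_trans (Finset.card_le_card hsubset) (Finset.card_biUnion_le)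
    have h2 : ∀ v : V, ((M v).offDiag).card ≤ d * (d - 1) := by
      intro v
      rw [Finset.offDiag_card]
      have hm := hMd v
      rw [← mul_sub_one_aux]
      exact Nat.mul_le_mul hm (Nat.sub_le_sub_right hm 1)
    have h3 : (Finset.univ : Finset (Fin t)).offDiag.card = t * (t - 1) := by
      rw [Finset.offDiag_card]
      simp only [Finset.card_univ, Fintype.card_fin]
      rw [← mul_sub_one_aux]
    calc t * (t - 1) = (Finset.univ : Finset (Fin t)).offDiag.card := h3.symm
      _ ≤ ∑ v : V, ((M v).offDiag).card := h1
      _ ≤ ∑ _v : V, d * (d - 1) := Finset.sum_le_sum (fun v _ => h2 v)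
      _ = Fintype.card V * (d * (d - 1)) := by
          rw [Finset.sum_const, smul_eq_mul, Finset.card_univ]
      _ = n * (d * (d - 1)) := by rw [hn]
  -- conclude t*t ≤ d*d*n in ℕ
  have hsq : t * t ≤ d * d * n := by
    rcases Nat.eq_zero_or_pos d with hd0 | hd0
    · subst hd0
      simp only [Nat.mul_zero] at ht_nd
      have : t = 0 := by omega
      simp [this]
    rcases Nat.eq_zero_or_pos t with ht0 | ht0
    · simp [ht0]
    have e1 : t * t = t * (t - 1) + t := by
      have htt : t ≤ t * t := Nat.le_mul_of_pos_left t ht0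
      rw [mul_sub_one_aux]; omega
    have e2 : n * (d * (d - 1)) + n * d = d * d * n := by
      rw [mul_sub_one_aux]
      have : d * d ≥ d := Nat.le_mul_of_pos_left d hd0
      calc n * (d * d - d) + n * d = n * (d * d) := by
            rw [← Nat.mul_add]; congr 1; omega
        _ = d * d * n := by ring
    have ht' : t ≤ n * d := by omega
    omega
  -- pass to the reals
  have hreal : (t : ℝ) * (t : ℝ) ≤ (d : ℝ) * (d : ℝ) * (n : ℝ) := by
    have := hsq
    exact_mod_cast Nat.cast_le.mpr hsq |>.trans_eq (by push_cast; ring)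
  have hsn : Real.sqrt n * Real.sqrt n = (n : ℝ) :=
    Real.mul_self_sqrt (by positivity)
  have hkey : (d : ℝ) * Real.sqrt n * ((d : ℝ) * Real.sqrt n) = (d : ℝ) * (d : ℝ) * (n : ℝ) := by
    calc (d : ℝ) * Real.sqrt n * ((d : ℝ) * Real.sqrt n)
        = (d : ℝ) * (d : ℝ) * (Real.sqrt n * Real.sqrt n) := by ring
      _ = (d : ℝ) * (d : ℝ) * (n : ℝ) := by rw [hsn]
  have hdn : (0 : ℝ) ≤ (d : ℝ) * Real.sqrt n := by positivity
  calc (t : ℝ) = Real.sqrt ((t : ℝ) * (t : ℝ)) := (Real.sqrt_mul_self (by positivity)).symm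
    _ ≤ Real.sqrt ((d : ℝ) * (d : ℝ) * (n : ℝ)) := Real.sqrt_le_sqrt hreal
    _ = (d : ℝ) * Real.sqrt n := by rw [← hkey, Real.sqrt_mul_self hdn]
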